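/- Let φ be a maximal weight at ζ with Lelong number ν_φ = ν_φ(ζ) > 0 and Łojasiewicz exponent α_φ = limsup_{z→ζ} φ(z)/log|z-ζ|. Then for any plurisubharmonic germ u at ζ, α_φ^{-1}·ν_u(ζ) ≤ σ(u,φ) ≤ ν_φ^{-1}·ν_u(ζ), where ν_u(ζ) = liminf_{z→ζ} u(z)/log|z-ζ| is the Lelong number of u at ζ. -/

import Mathlib

open Filter MeasureTheory Topology

noncomputable section

abbrev Cn (n : ℕ) := EuclideanSpace ℂ (Fin n)

/-- Plurisubharmonicity on `s`: upper semicontinuity together with the sub-mean value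
inequality along complex lines. -/
def PSHOn (n : ℕ) (f : Cn n → ℝ) (s : Set (Cn n)) : Prop :=
  UpperSemicontinuousOn f s ∧
    ∀ z ∈ s, ∀ w : Cn n,
      (∀ t : ℂ, ‖t‖ ≤ 1 → z + t • w ∈ s) →
        f z ≤ (2 * Real.pi)⁻¹ * ∫ θ in (0:ℝ)..(2 * Real.pi),
          f (z + Complex.exp (θ * Complex.I) • w)

/-- `f` is a maximal plurisubharmonic function on `ω`. -/
def MaximalOn (n : ℕ) (f : Cn n → ℝ) (ω : Set (Cn n)) : Prop :=
  ∀ U : Set (Cn n), IsOpen U → IsCompact (closure U) → closure U ⊆ ω →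
    ∀ v : Cn n → ℝ, PSHOn n v ω →
      (∀ z ∈ frontier U, v z ≤ f z) → ∀ z ∈ U, v z ≤ f z

/-- `φ` is a maximal weight centered at `ζ` on the neighbourhood `Ω`:
plurisubharmonic near `ζ`, locally bounded outside `ζ`, `φ(ζ) = -∞`
(equivalently, `φ → -∞` at `ζ`), and maximal in a punctured neighbourhood of `ζ`. -/
def IsMaxWeight (n : ℕ) (ζ : Cn n) (φ : Cn n → ℝ) (Ω : Set (Cn n)) : Prop :=
  IsOpen Ω ∧ ζ ∈ Ω ∧
    PSHOn n φ (Ω \ {ζ}) ∧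
    (∀ z ∈ Ω \ {ζ}, ∃ U ∈ 𝓝 z, BddBelow (φ '' U) ∧ BddAbove (φ '' U)) ∧
    Tendsto φ (𝓝[≠] ζ) atBot ∧
    MaximalOn n φ (Ω \ {ζ})

/-- The relative type `σ(u,φ) = liminf_{z→ζ} u(z)/φ(z)`. -/
def relType (n : ℕ) (u φ : Cn n → ℝ) (ζ : Cn n) : EReal :=
  liminf (fun z => ((u z / φ z : ℝ) : EReal)) (𝓝[≠] ζ)

/-- The Lelong number `ν_u(ζ) = liminf_{z→ζ} u(z)/log|z-ζ|`. -/
def lelong (n : ℕ) (u : Cn n → ℝ) (ζ : Cn n) : EReal :=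
  relType n u (fun z => Real.log ‖z - ζ‖) ζ


lemma ereal_le_of_forall_real_lt {x y : EReal} (h : ∀ c : ℝ, (c : EReal) < x → (c : EReal) ≤ y) :
    x ≤ y := by
  by_contra hxy
  push_neg at hxy
  obtain ⟨c, hyc, hcx⟩ := EReal.exists_between_coe_real hxy
  exact absurd (h c hcx) (not_le.mpr hyc)

lemma liminf_div_nonneg {X : Type*} {l : Filter X} {u g : X → ℝ} (M : ℝ)
    (hu : ∀ᶠ z in l, u z < M) (hg : Tendsto g l atBot) :
    (0 : EReal) ≤ liminf (fun z => ((u z / g z : ℝ) : EReal)) l := by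
  apply ereal_le_of_forall_real_lt
  intro c hc
  have hc' : c < 0 := by exact_mod_cast hc
  refine le_liminf_of_le (by isBoundedDefault) ?_
  filter_upwards [hu, hg.eventually (eventually_le_atBot (M / c)),
    hg.eventually (eventually_lt_atBot 0)] with z h1 h2 h3
  have hMc : M ≤ c * g z := by
    calc M = c * (M / c) := by rw [mul_comm, div_mul_cancel₀ _ (ne_of_lt hc')]
    _ ≤ c * g z := mul_le_mul_of_nonpos_left h2 hc'.le
  have hug : u z ≤ c * g z := le_trans h1.le hMc
  exact_mod_cast (le_div_iff_of_neg h3).mpr hug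

/-- Comparison with Lelong numbers: for a maximal weight `φ` with Lelong number
`ν_φ > 0` and Łojasiewicz exponent `α_φ = limsup_{z→ζ} φ(z)/log|z-ζ| < ∞`,
`α_φ⁻¹·ν_u(ζ) ≤ σ(u,φ) ≤ ν_φ⁻¹·ν_u(ζ)`. -/
theorem relType_vs_lelong (n : ℕ) (ζ : Cn n) (φ u : Cn n → ℝ) (Ω V : Set (Cn n))
    (hV : IsOpen V) (hζV : ζ ∈ V) (hu : PSHOn n u V)
    (hφ : IsMaxWeight n ζ φ Ω)
    (νφ α : ℝ) (hνφ : lelong n φ ζ = (νφ : EReal)) (hνφpos : 0 < νφ)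
    (hα : limsup (fun z => ((φ z / Real.log ‖z - ζ‖ : ℝ) : EReal)) (𝓝[≠] ζ)
        = (α : EReal))
    (hαpos : 0 < α) :
    ((α⁻¹ : ℝ) : EReal) * lelong n u ζ ≤ relType n u φ ζ ∧
      relType n u φ ζ ≤ ((νφ⁻¹ : ℝ) : EReal) * lelong n u ζ := by
  set L := 𝓝[≠] ζ with hL
  set lg : Cn n → ℝ := fun z => Real.log ‖z - ζ‖ with hlg
  have hφBot : Tendsto φ L atBot := hφ.2.2.2.2.1
  have hlogBot : Tendsto lg L atBot := by
    apply Real.tendsto_log_nhdsGT_zero.comp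
    rw [tendsto_nhdsWithin_iff]
    constructor
    · have h0 : Tendsto (fun z : Cn n => ‖z - ζ‖) (𝓝 ζ) (𝓝 ‖ζ - ζ‖) :=
        (continuous_id.sub continuous_const).norm.tendsto ζ
      simpa using h0.mono_left nhdsWithin_le_nhds
    · filter_upwards [self_mem_nhdsWithin] with z hz
      exact Set.mem_Ioi.mpr (norm_pos_iff.mpr (sub_ne_zero.mpr hz))
  have hφneg : ∀ᶠ z in L, φ z < 0 := hφBot.eventually (eventually_lt_atBot 0)
  have hlogneg : ∀ᶠ z in L, lg z < 0 := hlogBot.eventually (eventually_lt_atBot 0)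
  have hM : ∀ᶠ z in L, u z < u ζ + 1 := by
    have h1 : ∀ᶠ z in 𝓝[V] ζ, u z < u ζ + 1 := hu.1 ζ hζV (u ζ + 1) (by linarith)
    rw [nhdsWithin_eq_nhds.mpr (hV.mem_nhds hζV)] at h1
    exact h1.filter_mono nhdsWithin_le_nhds
  have hA0 : (0 : EReal) ≤ relType n u φ ζ := liminf_div_nonneg (u ζ + 1) hM hφBot
  have hB0 : (0 : EReal) ≤ lelong n u ζ := liminf_div_nonneg (u ζ + 1) hM hlogBot
  have hBliminf : lelong n u ζ = liminf (fun z => ((u z / lg z : ℝ) : EReal)) L := rfl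
  have hAliminf : relType n u φ ζ = liminf (fun z => ((u z / φ z : ℝ) : EReal)) L := rfl
  have hνliminf : liminf (fun z => ((φ z / lg z : ℝ) : EReal)) L = (νφ : EReal) := hνφ
  have hBnebot : lelong n u ζ ≠ ⊥ := fun h => by simp [h] at hB0
  have hBcase : lelong n u ζ = ⊤ ∨ ∃ b : ℝ, lelong n u ζ = (b : EReal) := by
    rcases eq_or_ne (lelong n u ζ) ⊤ with h | h
    · exact Or.inl h
    · exact Or.inr ⟨(lelong n u ζ).toReal, (EReal.coe_toReal h hBnebot).symm⟩
  constructor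
  · -- α⁻¹ * B ≤ A
    apply ereal_le_of_forall_real_lt
    intro c hc
    rcases le_or_gt c 0 with hc0 | hc0
    · exact le_trans (by exact_mod_cast hc0) hA0
    · obtain ⟨c'', hcc, hc''B⟩ : ∃ c'' : ℝ, c < c'' ∧ ((α * c'' : ℝ) : EReal) < lelong n u ζ := by
        rcases hBcase with hBtop | ⟨b, hBb⟩
        · exact ⟨c + 1, by linarith, by rw [hBtop]; exact EReal.coe_lt_top _⟩
        · rw [hBb] at hc ⊢
          rw [← EReal.coe_mul, EReal.coe_lt_coe_iff] at hc
          have hb : α * c < b := by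
            calc α * c < α * (α⁻¹ * b) := by exact mul_lt_mul_of_pos_left hc hαpos
            _ = b := by field_simp
          refine ⟨(c + α⁻¹ * b) / 2, by nlinarith [mul_pos hαpos hc0], ?_⟩
          rw [EReal.coe_lt_coe_iff]
          have h2 : α * ((c + α⁻¹ * b) / 2) = (α * c + b) / 2 := by field_simp
          rw [h2]; linarith
      have hev1 : ∀ᶠ z in L, ((α * c'' : ℝ) : EReal) < ((u z / lg z : ℝ) : EReal) :=
        eventually_lt_of_lt_liminf (hBliminf ▸ hc''B)
      have hc''pos : 0 < c'' := hc0.trans hcc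
      set α' : ℝ := α * c'' / c with hα'
      have hαα' : (α : EReal) < (α' : EReal) := by
        rw [EReal.coe_lt_coe_iff, hα', lt_div_iff₀ hc0]
        nlinarith
      have hev2 : ∀ᶠ z in L, ((φ z / lg z : ℝ) : EReal) < (α' : EReal) :=
        eventually_lt_of_limsup_lt (hα ▸ hαα')
      rw [hAliminf]
      refine le_liminf_of_le (by isBoundedDefault) ?_
      filter_upwards [hev1, hev2, hφneg, hlogneg] with z h1 h2 h3 h4
      rw [EReal.coe_lt_coe_iff] at h1 h2
      rw [EReal.coe_le_coe_iff]
      have e1 : u z < (α * c'') * lg z := (lt_div_iff_of_neg h4).mp h1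
      have e2 : α' * lg z < φ z := (div_lt_iff_of_neg h4).mp h2
      have hca : c * α' = α * c'' := by rw [hα']; field_simp [hc0.ne']
      have e3 : c * (α' * lg z) = (α * c'') * lg z := by rw [← mul_assoc, hca]
      have huz : u z < c * φ z := by
        have e4 := mul_lt_mul_of_pos_left e2 hc0
        linarith
      exact ((lt_div_iff_of_neg h3).mpr huz).le
  · -- A ≤ νφ⁻¹ * B
    apply ereal_le_of_forall_real_lt
    intro c hcA
    rcases le_or_gt c 0 with hc0 | hc0
    · have h1 : (c : EReal) ≤ ((0:ℝ) : EReal) := by exact_mod_cast hc0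
      have h2 : (0 : EReal) ≤ ((νφ⁻¹ : ℝ) : EReal) := by
        exact_mod_cast (inv_pos.mpr hνφpos).le
      exact le_trans (by simpa using h1) (mul_nonneg h2 hB0)
    · obtain ⟨c'', hcc, hc''A⟩ : ∃ c'' : ℝ, c < c'' ∧ ((c'' : ℝ) : EReal) < relType n u φ ζ := by
        obtain ⟨y, hy1, hy2⟩ := EReal.exists_between_coe_real hcA
        exact ⟨y, by exact_mod_cast hy1, hy2⟩
      have hc''pos : 0 < c'' := hc0.trans hcc
      have hev1 : ∀ᶠ z in L, ((c'' : ℝ) : EReal) < ((u z / φ z : ℝ) : EReal) :=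
        eventually_lt_of_lt_liminf (hAliminf ▸ hc''A)
      set d : ℝ := νφ * c / c'' with hd
      have hdν : (d : EReal) < liminf (fun z => ((φ z / lg z : ℝ) : EReal)) L := by
        rw [hνliminf, EReal.coe_lt_coe_iff, hd, div_lt_iff₀ hc''pos]
        nlinarith
      have hev2 : ∀ᶠ z in L, (d : EReal) < ((φ z / lg z : ℝ) : EReal) :=
        eventually_lt_of_lt_liminf hdν
      have key : ((νφ * c : ℝ) : EReal) ≤ lelong n u ζ := by
        rw [hBliminf]
        refine le_liminf_of_le (by isBoundedDefault) ?_
        filter_upwards [hev1, hev2, hφneg, hlogneg] with z h1 h2 h3 h4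
        rw [EReal.coe_lt_coe_iff] at h1 h2
        rw [EReal.coe_le_coe_iff]
        have e1 : u z < c'' * φ z := (lt_div_iff_of_neg h3).mp h1
        have e2 : φ z < d * lg z := (lt_div_iff_of_neg h4).mp h2
        have hcd : c'' * d = νφ * c := by rw [hd]; field_simp [hc''pos.ne']
        have e3 : c'' * (d * lg z) = (νφ * c) * lg z := by rw [← mul_assoc, hcd]
        have huz : u z < (νφ * c) * lg z := by
          have e4 := mul_lt_mul_of_pos_left e2 hc''pos
          linarith
        exact ((lt_div_iff_of_neg h4).mpr huz).le
      rcases hBcase with hBtop | ⟨b, hBb⟩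
      · rw [hBtop, EReal.coe_mul_top_of_pos (inv_pos.mpr hνφpos)]
        exact le_top
      · rw [hBb] at key ⊢
        rw [EReal.coe_le_coe_iff] at key
        rw [← EReal.coe_mul, EReal.coe_le_coe_iff]
        calc c = νφ⁻¹ * (νφ * c) := by field_simp
        _ ≤ νφ⁻¹ * b := mul_le_mul_of_nonneg_left key (inv_pos.mpr hνφpos).le
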